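/- Let A be a Banach algebra with a right identity e, and let d : A → A be a Jordan left derivation. If d maps A into the right annihilator ran(A), then d = 0. -/
import Mathlib


/-- Let `A` be a complex Banach algebra with a right identity `e`, and let
`d : A → A` be a Jordan left derivation (`d (a²) = 2 • (a * d a)`).  If `d` maps `A` into the
right annihilator `ran(A) = {x | ∀ a, a * x = 0}`, then `d = 0`. -/
theorem jordanLeftDerivation_into_rightAnnihilator_eq_zero
    {A : Type*} [NonUnitalNormedRing A] [NormedSpace ℂ A]
    [IsScalarTower ℂ A A] [SMulCommClass ℂ A A] [CompleteSpace A]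
    (e : A) (he : ∀ a : A, a * e = a)
    (d : A →ₗ[ℂ] A) (hd : ∀ a : A, d (a * a) = 2 • (a * d a))
    (hrange : ∀ a x : A, x * d a = 0) :
    ∀ a : A, d a = 0 := by
  have h0 : ∀ a : A, d (a * a) = 0 := fun a => by rw [hd, hrange, smul_zero]
  have hsym : ∀ a b : A, d (a * b + b * a) = 0 := by
    intro a b
    have h := h0 (a + b)
    have hexp : (a + b) * (a + b) = a * a + (a * b + b * a) + b * b := by noncomm_ring
    rw [hexp, map_add, map_add, h0, h0, zero_add, add_zero] at h
    exact h
  have haba : ∀ a b : A, d (a * b * a) = 0 := by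
    intro a b
    have h := hsym a (a * b + b * a)
    have hexp : a * (a * b + b * a) + (a * b + b * a) * a
        = (a * a * b + b * (a * a)) + (a * b * a + a * b * a) := by noncomm_ring
    rw [hexp, map_add, hsym, zero_add, map_add] at h
    have h2 : (2 : ℂ) • d (a * b * a) = 0 := by
      rw [two_smul]; exact h
    have := smul_eq_zero.mp h2
    simpa using this
  intro a
  have h1 : d (e * a) = 0 := by
    have := haba e a
    rwa [he] at this
  have h2 := hsym a e
  rw [he, map_add, h1, add_zero] at h2
  exact h2
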